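/- In Fourier transform coordinates, the forward derivative operator D on the p-adic tree satisfies (Df_n)^(k) = p^n (f̂_n(k) − f̂_{n+1}(pk)) for all 0 ≤ k < p^n, where Df_n(l) = p^n ( f_n(l) − (1/p) Σ_{j=0}^{p−1} f_{n+1}(l + j p^n) ). -/

import Mathlib

/-- In Fourier coordinates the forward derivative `D` on the `p`-adic tree satisfies
`(Df_n)^(k) = p^n (f̂_n(k) - f̂_{n+1}(pk))`. -/
theorem stmt6 (p : ℕ) (hp : p.Prime) (f F : ℕ → ℕ → ℂ)
    (hF : ∀ n l, F n l = ((p : ℂ) ^ n)⁻¹ * ∑ k ∈ Finset.range (p ^ n),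
        f n k * Complex.exp (-(2 * Real.pi * Complex.I) * (k : ℂ) * (l : ℂ) / ((p : ℂ) ^ n))) :
    ∀ n k, k < p ^ n →
      ((p : ℂ) ^ n)⁻¹ * ∑ l ∈ Finset.range (p ^ n),
          ((p : ℂ) ^ n * (f n l - (p : ℂ)⁻¹ * ∑ j ∈ Finset.range p, f (n + 1) (l + j * p ^ n))) *
            Complex.exp (-(2 * Real.pi * Complex.I) * (l : ℂ) * (k : ℂ) / ((p : ℂ) ^ n))
        = (p : ℂ) ^ n * (F n k - F (n + 1) (p * k)) := by
  intro n k hk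
  have hp0' : p ≠ 0 := hp.pos.ne'
  have hp0 : (p : ℂ) ≠ 0 := Nat.cast_ne_zero.mpr hp0'
  have hpn : ((p : ℂ) ^ n) ≠ 0 := pow_ne_zero _ hp0
  have key : ∑ l ∈ Finset.range (p ^ n),
      (∑ j ∈ Finset.range p, f (n + 1) (l + j * p ^ n)) *
        Complex.exp (-(2 * Real.pi * Complex.I) * (l : ℂ) * (k : ℂ) / ((p : ℂ) ^ n))
      = ∑ m ∈ Finset.range (p ^ (n + 1)),
        f (n + 1) m * Complex.exp (-(2 * Real.pi * Complex.I) * (m : ℂ) * ((p * k : ℕ) : ℂ)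
          / ((p : ℂ) ^ (n + 1))) := by
    have h1 : ∀ l ∈ Finset.range (p ^ n),
        (∑ j ∈ Finset.range p, f (n + 1) (l + j * p ^ n)) *
          Complex.exp (-(2 * Real.pi * Complex.I) * (l : ℂ) * (k : ℂ) / ((p : ℂ) ^ n))
        = ∑ j ∈ Finset.range p, f (n + 1) (l + j * p ^ n) *
            Complex.exp (-(2 * Real.pi * Complex.I) * ((l + j * p ^ n : ℕ) : ℂ)
              * ((p * k : ℕ) : ℂ) / ((p : ℂ) ^ (n + 1))) := by
      intro l _
      rw [Finset.sum_mul]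
      refine Finset.sum_congr rfl fun j _ => ?_
      congr 1
      have heq : -(2 * Real.pi * Complex.I) * ((l + j * p ^ n : ℕ) : ℂ)
            * ((p * k : ℕ) : ℂ) / ((p : ℂ) ^ (n + 1))
          = -(2 * Real.pi * Complex.I) * (l : ℂ) * (k : ℂ) / ((p : ℂ) ^ n)
            + (-(j * k : ℤ) : ℂ) * (2 * Real.pi * Complex.I) := by
        push_cast
        field_simp
        ring
      have h2 := Complex.exp_int_mul_two_pi_mul_I (-(j * k : ℤ))
      rw [heq, Complex.exp_add]
      push_cast at h2 ⊢
      rw [h2, mul_one]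
    rw [Finset.sum_congr rfl h1, ← Finset.sum_product']
    refine Finset.sum_nbij' (fun x => x.1 + x.2 * p ^ n) (fun m => (m % p ^ n, m / p ^ n))
      ?_ ?_ ?_ ?_ ?_
    · rintro ⟨l, j⟩ hx
      simp only [Finset.mem_product, Finset.mem_range] at hx ⊢
      have : l + j * p ^ n < p ^ n + (p - 1) * p ^ n :=
        add_lt_add_of_lt_of_le hx.1 (Nat.mul_le_mul_right _ (Nat.le_pred_of_lt hx.2))
      calc l + j * p ^ n < p ^ n + (p - 1) * p ^ n := this
        _ = p * p ^ n := by
            rw [Nat.sub_mul, one_mul]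
            have h1 : p ^ n ≤ p * p ^ n := Nat.le_mul_of_pos_left _ hp.pos
            omega
        _ = p ^ (n + 1) := (pow_succ' p n).symm
    · intro m hm
      simp only [Finset.mem_range] at hm
      simp only [Finset.mem_product, Finset.mem_range]
      constructor
      · exact Nat.mod_lt _ (pow_pos hp.pos n)
      · rw [Nat.div_lt_iff_lt_mul (pow_pos hp.pos n)]
        calc m < p ^ (n + 1) := hm
          _ = p * p ^ n := pow_succ' p n
    · rintro ⟨l, j⟩ hx
      simp only [Finset.mem_product, Finset.mem_range] at hx
      have hpn' : 0 < p ^ n := pow_pos hp.pos n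
      ext
      · simp [Nat.add_mul_mod_self_right, Nat.mod_eq_of_lt hx.1]
      · simp [Nat.add_mul_div_right _ _ hpn', Nat.div_eq_of_lt hx.1]
    · intro m _
      exact Nat.mod_add_div' m (p ^ n)
    · rintro ⟨l, j⟩ _
      rfl
  rw [hF, hF]
  rw [Finset.sum_congr rfl (fun l _ => by ring :
    ∀ l ∈ Finset.range (p ^ n),
      ((p : ℂ) ^ n * (f n l - (p : ℂ)⁻¹ * ∑ j ∈ Finset.range p, f (n + 1) (l + j * p ^ n))) *
        Complex.exp (-(2 * Real.pi * Complex.I) * (l : ℂ) * (k : ℂ) / ((p : ℂ) ^ n))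
      = (p : ℂ) ^ n * (f n l *
          Complex.exp (-(2 * Real.pi * Complex.I) * (l : ℂ) * (k : ℂ) / ((p : ℂ) ^ n)))
        - (p : ℂ) ^ n * (p : ℂ)⁻¹ *
          ((∑ j ∈ Finset.range p, f (n + 1) (l + j * p ^ n)) *
            Complex.exp (-(2 * Real.pi * Complex.I) * (l : ℂ) * (k : ℂ) / ((p : ℂ) ^ n))))]
  rw [Finset.sum_sub_distrib, ← Finset.mul_sum, ← Finset.mul_sum, key]
  have hpn1 : ((p : ℂ) ^ (n + 1)) ≠ 0 := pow_ne_zero _ hp0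
  generalize (∑ l ∈ Finset.range (p ^ n), f n l *
    Complex.exp (-(2 * Real.pi * Complex.I) * (l : ℂ) * (k : ℂ) / ((p : ℂ) ^ n))) = A
  generalize (∑ m ∈ Finset.range (p ^ (n + 1)), f (n + 1) m * Complex.exp (-(2 * Real.pi * Complex.I) *
    (m : ℂ) * ((p * k : ℕ) : ℂ) / ((p : ℂ) ^ (n + 1)))) = B
  field_simp
  ring
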